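/- There exists an absolute constant K > 0 such that the following holds. Let α > 0, let C ∈ ℂ^{M×M} be Hermitian positive semidefinite with min_i [C]_{i,i} ≥ α, and let Ĉ ∈ ℂ^{M×M} be Hermitian with ‖Ĉ − C‖_∞ ≤ α/2. Then for all i, j ∈ {1,…,M}, |[Ĉ]_{i,j}/√([Ĉ]_{i,i}[Ĉ]_{j,j}) − [C]_{i,j}/√([C]_{i,i}[C]_{j,j})| ≤ K·‖C‖_∞·α^{−2}·‖Ĉ − C‖_∞. -/

import Mathlib

open MeasureTheory ProbabilityTheory Matrix
open scoped ComplexOrder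

noncomputable section

/-- Entrywise maximum-modulus norm of a complex matrix. -/
def maxNorm {M : ℕ} (A : Matrix (Fin M) (Fin M) ℂ) : ℝ :=
  ⨆ i, ⨆ j, ‖A i j‖

/-- Frobenius norm of a complex matrix. -/
def frobNorm {M : ℕ} (A : Matrix (Fin M) (Fin M) ℂ) : ℝ :=
  Real.sqrt (∑ i, ∑ j, ‖A i j‖ ^ 2)

/-- Spectral (operator) norm of a complex matrix. -/
def specNorm {M : ℕ} (A : Matrix (Fin M) (Fin M) ℂ) : ℝ :=
  ‖Matrix.toEuclideanCLM (𝕜 := ℂ) (n := Fin M) A‖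

/-- diag(C)^{-1/2}: the diagonal matrix with entries [C]_{ii}^{-1/2}. -/
def dInvSqrt {M : ℕ} (C : Matrix (Fin M) (Fin M) ℂ) : Matrix (Fin M) (Fin M) ℂ :=
  Matrix.diagonal fun i => ((Real.sqrt (C i i).re)⁻¹ : ℂ)

/-- Bussgang gain A = sqrt(2/π)·diag(C)^{-1/2}. -/
def busA {M : ℕ} (C : Matrix (Fin M) (Fin M) ℂ) : Matrix (Fin M) (Fin M) ℂ :=
  (Real.sqrt (2 / Real.pi) : ℂ) • dInvSqrt C

/-- The arcsine-law map P_arcsine(C) = (2/π)[arcsin(D^{-1/2} Re(C) D^{-1/2}) + i·arcsin(D^{-1/2} Im(C) D^{-1/2})]. -/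
def arcsineMap {M : ℕ} (C : Matrix (Fin M) (Fin M) ℂ) : Matrix (Fin M) (Fin M) ℂ :=
  Matrix.of fun i j =>
    ((2 / Real.pi : ℝ) : ℂ) *
      ((Real.arcsin ((C i j).re / (Real.sqrt (C i i).re * Real.sqrt (C j j).re)) : ℝ) +
        Complex.I *
          ((Real.arcsin ((C i j).im / (Real.sqrt (C i i).re * Real.sqrt (C j j).re)) : ℝ) : ℂ))

/-- one-bit sign quantizer: sign(x) = 1 if x ≥ 0, else -1. -/
def rsign (x : ℝ) : ℝ := if 0 ≤ x then 1 else -1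

/-- one-bit complex quantization with dithers: sign(Re(y)+τ^R) + i·sign(Im(y)+τ^I). -/
def quant {M : ℕ} (yv : Fin M → ℂ) (tR tI : Fin M → ℝ) : Fin M → ℂ :=
  fun i => (rsign ((yv i).re + tR i) : ℂ) + Complex.I * (rsign ((yv i).im + tI i) : ℂ)

/-- dithered covariance estimator Ĉ = ½ C̃ + ½ C̃ᴴ with C̃ = (λ²/N) Σ r_n r̃_nᴴ. -/
def ditherEst {M N : ℕ} (lam : ℝ) (r rt : Fin N → Fin M → ℂ) : Matrix (Fin M) (Fin M) ℂ :=
  ((1 : ℂ)/2) • (Matrix.of (fun i j => ((lam ^ 2 / N : ℝ) : ℂ) * ∑ n, r n i * (starRingEnd ℂ) (rt n j))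
    + (Matrix.of (fun i j => ((lam ^ 2 / N : ℝ) : ℂ) * ∑ n, r n i * (starRingEnd ℂ) (rt n j)))ᴴ)

/-- the uniform probability measure on [-λ, λ]. -/
def unifIcc (lam : ℝ) : Measure ℝ :=
  (ENNReal.ofReal (2 * lam))⁻¹ • (volume.restrict (Set.Icc (-lam) lam))

/-- S-subgaussian coordinates: (E|Re(y)_j|^p)^{1/p}, (E|Im(y)_j|^p)^{1/p} ≤ S √p ‖C_y‖_∞^{1/2} for p ≥ 2. -/
def SubgaussianCoords {Ω : Type} [MeasureSpace Ω] {M : ℕ} (S : ℝ)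
    (y : Ω → Fin M → ℂ) (Cy : Matrix (Fin M) (Fin M) ℂ) : Prop :=
  ∀ (p : ℝ), 2 ≤ p → ∀ j : Fin M,
    (∫ ω, |(y ω j).re| ^ p) ^ (1/p) ≤ S * Real.sqrt p * Real.sqrt (maxNorm Cy) ∧
    (∫ ω, |(y ω j).im| ^ p) ^ (1/p) ≤ S * Real.sqrt p * Real.sqrt (maxNorm Cy)

lemma abs_le_maxNorm' {M : ℕ} (A : Matrix (Fin M) (Fin M) ℂ) (i j : Fin M) :
    ‖A i j‖ ≤ maxNorm A := by
  refine le_trans (le_ciSup (f := fun j => ‖A i j‖) (Set.finite_range _).bddAbove j)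
    (le_ciSup (f := fun i => ⨆ j, ‖A i j‖) (Set.finite_range _).bddAbove i)

lemma herm_diag_im {M : ℕ} {C : Matrix (Fin M) (Fin M) ℂ} (hC : C.IsHermitian) (i : Fin M) :
    (C i i).im = 0 := by
  have h := congrArg Complex.im (hC.apply i i)
  simp [Complex.conj_im] at h
  linarith

lemma psd_entry {M : ℕ} {C : Matrix (Fin M) (Fin M) ℂ} (hC : C.PosSemidef)
    (i j : Fin M) (hi : 0 < (C i i).re) :
    ‖C i j‖ ^ 2 ≤ (C i i).re * (C j j).re := by
  have him_i := herm_diag_im hC.1 i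
  have him_j := herm_diag_im hC.1 j
  rcases eq_or_ne i j with rfl | hij
  · rw [Complex.sq_norm, Complex.normSq_apply, him_i]
    nlinarith
  · have hji : C j i = star (C i j) := by
      have := hC.1.apply i j
      rw [← this]; simp
    set z := C i j with hz
    set c : ℂ := -((((C i i).re)⁻¹ : ℝ) : ℂ) * z with hc
    have hx : star (Pi.single i c + Pi.single j 1) ⬝ᵥ C *ᵥ (Pi.single i c + Pi.single j 1)
        = star c * (C i i * c) + star c * (C i j * 1) + (1 : ℂ) * (C j i * c) + 1 * (C j j * 1) := by
      rw [star_add, mulVec_add, show C *ᵥ Pi.single i c = fun k => C k i * c from funext fun _ => dotProduct_single _ _ _,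
        show C *ᵥ Pi.single j 1 = fun k => C k j * 1 from funext fun _ => dotProduct_single _ _ _]
      rw [add_dotProduct, dotProduct_add, dotProduct_add,
        ← Pi.single_star, ← Pi.single_star, star_one,
        single_dotProduct, single_dotProduct, single_dotProduct, single_dotProduct]
      beta_reduce
      ring
    have h0 := (posSemidef_iff_dotProduct_mulVec.mp hC).2 (Pi.single i c + Pi.single j 1)
    rw [hx, Complex.nonneg_iff] at h0
    have h1 := h0.1
    rw [hji] at h1
    simp only [hc, ← hz, Complex.star_def, _root_.map_mul, map_neg, Complex.conj_ofReal,
      Complex.add_re, Complex.mul_re, Complex.mul_im, Complex.neg_re, Complex.neg_im,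
      Complex.ofReal_re, Complex.ofReal_im, Complex.conj_re, Complex.conj_im,
      Complex.one_re, Complex.one_im, mul_one, him_i] at h1
    rw [Complex.sq_norm, Complex.normSq_apply]
    have hr : (C i i).re ≠ 0 := ne_of_gt hi
    have e1 : (C i i).re * ((C i i).re⁻¹ * z.re * ((C i i).re⁻¹ * z.re))
        = (C i i).re⁻¹ * (z.re * z.re) := by field_simp
    have e2 : (C i i).re * ((C i i).re⁻¹ * z.im * ((C i i).re⁻¹ * z.im))
        = (C i i).re⁻¹ * (z.im * z.im) := by field_simp
    have h2 : (C i i).re⁻¹ * (z.re * z.re) + (C i i).re⁻¹ * (z.im * z.im) ≤ (C j j).re := by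
      nlinarith [h1, e1, e2]
    have h3 : (C i i).re * ((C i i).re⁻¹ * (z.re * z.re) + (C i i).re⁻¹ * (z.im * z.im))
        = z.re * z.re + z.im * z.im := by field_simp
    nlinarith [mul_le_mul_of_nonneg_left h2 hi.le, h3]

set_option maxHeartbeats 2000000 in
/-- stability of the normalized correlation entries. -/
theorem stmt9 :
    ∃ K : ℝ, 0 < K ∧
      ∀ (M : ℕ) (α : ℝ), 0 < α →
      ∀ (C Chat : Matrix (Fin M) (Fin M) ℂ), C.PosSemidef → Chat.IsHermitian →
      (∀ i, α ≤ (C i i).re) → maxNorm (Chat - C) ≤ α / 2 →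
      ∀ i j, ‖Chat i j / ((Real.sqrt ((Chat i i).re * (Chat j j).re) : ℝ) : ℂ)
          - C i j / ((Real.sqrt ((C i i).re * (C j j).re) : ℝ) : ℂ)‖
        ≤ K * maxNorm C * (α ^ 2)⁻¹ * maxNorm (Chat - C) := by
  refine ⟨8, by norm_num, ?_⟩
  intro M α hα C Chat hC hChat hdiag hclose i j
  set ε := maxNorm (Chat - C) with hεdef
  set m := maxNorm C with hmdef
  have habsC : ∀ k l, ‖C k l‖ ≤ m := fun k l => abs_le_maxNorm' C k l
  have habsE : ∀ k l, ‖(Chat - C) k l‖ ≤ ε := fun k l => abs_le_maxNorm' _ k l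
  have hε0 : 0 ≤ ε := le_trans (norm_nonneg _) (habsE i i)
  have hre_diff : ∀ k, |(Chat k k).re - (C k k).re| ≤ ε := by
    intro k
    have h : (Chat k k).re - (C k k).re = ((Chat - C) k k).re := by
      simp [Matrix.sub_apply]
    rw [h]
    exact (Complex.abs_re_le_norm _).trans (habsE k k)
  have ha : α ≤ (C i i).re := hdiag i
  have hb : α ≤ (C j j).re := hdiag j
  have ham : (C i i).re ≤ m := le_trans (Complex.re_le_norm _) (habsC i i)
  have hbm : (C j j).re ≤ m := le_trans (Complex.re_le_norm _) (habsC j j)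
  have hαm : α ≤ m := ha.trans ham
  have hdi := abs_le.mp (hre_diff i)
  have hdj := abs_le.mp (hre_diff j)
  have ha' : α / 2 ≤ (Chat i i).re := by linarith [hdi.1, hclose]
  have hb' : α / 2 ≤ (Chat j j).re := by linarith [hdj.1, hclose]
  have ha'm : (Chat i i).re ≤ m + ε := by linarith [hdi.2]
  have hb'm : (Chat j j).re ≤ m + ε := by linarith [hdj.2]
  set d : ℝ := Real.sqrt ((C i i).re * (C j j).re) with hddef
  set d' : ℝ := Real.sqrt ((Chat i i).re * (Chat j j).re) with hd'def
  have hab : (0:ℝ) ≤ (C i i).re * (C j j).re := by nlinarith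
  have ha'b' : (0:ℝ) ≤ (Chat i i).re * (Chat j j).re := by nlinarith
  have hd : α ≤ d := (Real.le_sqrt hα.le hab).mpr (by nlinarith)
  have hd' : α / 2 ≤ d' := (Real.le_sqrt (by linarith) ha'b').mpr (by nlinarith)
  have hdpos : 0 < d := lt_of_lt_of_le hα hd
  have hd'pos : 0 < d' := lt_of_lt_of_le (by linarith) hd'
  have hCij : ‖C i j‖ ≤ d :=
    (Real.le_sqrt (norm_nonneg _) hab).mpr (psd_entry hC i j (lt_of_lt_of_le hα ha))
  have hsq : d ^ 2 = (C i i).re * (C j j).re := Real.sq_sqrt hab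
  have hsq' : d' ^ 2 = (Chat i i).re * (Chat j j).re := Real.sq_sqrt ha'b'
  have hnum : |d ^ 2 - d' ^ 2| ≤ 3 * m * ε := by
    rw [hsq, hsq', abs_le]
    constructor <;> nlinarith [hdi.1, hdi.2, hdj.1, hdj.2, hε0, hclose, hαm, hα]
  have hdd' : |d - d'| * (d + d') ≤ 3 * m * ε := by
    have habs : |d - d'| * (d + d') = |d ^ 2 - d' ^ 2| := by
      rw [← abs_of_pos (show (0:ℝ) < d + d' by linarith), ← abs_mul]
      ring_nf
    rw [habs]; exact hnum
  have hdne : ((d : ℂ)) ≠ 0 := by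
    simpa using Complex.ofReal_ne_zero.mpr (ne_of_gt hdpos)
  have hd'ne : ((d' : ℂ)) ≠ 0 := by
    simpa using Complex.ofReal_ne_zero.mpr (ne_of_gt hd'pos)
  have expand : Chat i j / (d' : ℂ) - C i j / (d : ℂ)
      = (Chat i j - C i j) / (d' : ℂ) + C i j * (((d - d' : ℝ) : ℂ) / ((d' : ℂ) * (d : ℂ))) := by
    push_cast
    field_simp
    ring
  rw [expand]
  have step1 : ‖(Chat i j - C i j) / (d' : ℂ)
        + C i j * (((d - d' : ℝ) : ℂ) / ((d' : ℂ) * (d : ℂ)))‖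
      ≤ ‖Chat i j - C i j‖ / d'
        + ‖C i j‖ * (|d - d'| / (d' * d)) := by
    refine (norm_add_le _ _).trans ?_
    rw [norm_div, norm_mul, norm_div, norm_mul, Complex.norm_real,
      Complex.norm_real, Complex.norm_real, Real.norm_eq_abs, Real.norm_eq_abs, Real.norm_eq_abs, abs_of_pos hd'pos, abs_of_pos hdpos]
  refine step1.trans ?_
  have hE : ‖Chat i j - C i j‖ ≤ ε := by
    have h : Chat i j - C i j = (Chat - C) i j := by simp [Matrix.sub_apply]
    rw [h]; exact habsE i j
  have hmε : 0 ≤ m * ε := mul_nonneg (le_trans hα.le hαm) hε0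
  have term1 : ‖Chat i j - C i j‖ / d' ≤ 2 * m * ε / α ^ 2 := by
    have t0 : ‖Chat i j - C i j‖ / d' ≤ ε / d' := by gcongr
    refine t0.trans ?_
    rw [div_le_div_iff₀ hd'pos (pow_pos hα 2)]
    · skip
      nlinarith [mul_le_mul_of_nonneg_left hd' (le_trans hα.le hαm),
        mul_nonneg hε0 (mul_nonneg hα.le (sub_nonneg.mpr hαm))]
  have term2 : ‖C i j‖ * (|d - d'| / (d' * d)) ≤ 6 * m * ε / α ^ 2 := by
    have s1 : ‖C i j‖ * (|d - d'| / (d' * d)) ≤ d * (|d - d'| / (d' * d)) :=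
      mul_le_mul_of_nonneg_right hCij (by positivity)
    have s2 : d * (|d - d'| / (d' * d)) = |d - d'| / d' := by
      field_simp
    rw [s2] at s1
    refine s1.trans ?_
    rw [div_le_div_iff₀ hd'pos (pow_pos hα 2)]
    have h4 : |d - d'| * α ≤ 3 * m * ε := by
      have := mul_le_mul_of_nonneg_left hd (abs_nonneg (d - d'))
      nlinarith [mul_nonneg (abs_nonneg (d - d')) hd'pos.le]
    nlinarith [mul_le_mul_of_nonneg_right h4 hα.le,
      mul_le_mul_of_nonneg_left (show α ≤ 2 * d' by linarith) hmε]
  have hfinal : 2 * m * ε / α ^ 2 + 6 * m * ε / α ^ 2 = 8 * m * (α ^ 2)⁻¹ * ε := by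
    field_simp
    ring
  linarith [term1, term2]


end
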